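/- For all real a, θ and all real n, the matrices satisfy M₊(n − 1/2) · M₋(n − 1/2) − M₋(n + 1/2) · M₊(n + 1/2) = (2n) • 1, where 1 is the 2×2 identity matrix. (This is the sl₂(ℝ) commutation relation [T₊, T₋] = −2i T₂₁ evaluated on the n-th eigenspace of T₂₁, since T₊(n−1)T₋(n) − T₋(n+1)T₊(n) must equal 2n·1.) -/
import Mathlib


open Complex Matrix

/-- The matrix block of the raising operator `T₊(n)` at `s = n + 1/2` (with `a = Rm`). -/
noncomputable def Mplus (a θ s : ℝ) : Matrix (Fin 2) (Fin 2) ℂ :=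
  !![-(I * a) + ((s * Real.tanh θ : ℝ) : ℂ), ((s / Real.cosh θ : ℝ) : ℂ);
     -((s / Real.cosh θ : ℝ) : ℂ), I * a + ((s * Real.tanh θ : ℝ) : ℂ)]

/-- The matrix block of the lowering operator `T₋(n)` at `s = n − 1/2` (with `a = Rm`). -/
noncomputable def Mminus (a θ s : ℝ) : Matrix (Fin 2) (Fin 2) ℂ :=
  !![-(I * a) - ((s * Real.tanh θ : ℝ) : ℂ), ((s / Real.cosh θ : ℝ) : ℂ);
     -((s / Real.cosh θ : ℝ) : ℂ), I * a - ((s * Real.tanh θ : ℝ) : ℂ)]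

/-- **The `sl₂(ℝ)` relation `[T₊, T₋] = −2i T₂₁` on the `n`-th eigenspace of `T₂₁`**:
for all real `a`, `θ`, `n`,
`M₊(n − 1/2)·M₋(n − 1/2) − M₋(n + 1/2)·M₊(n + 1/2) = (2n) • 1`. -/
theorem Mplus_Mminus_commutation (a θ n : ℝ) :
    Mplus a θ (n - 1 / 2) * Mminus a θ (n - 1 / 2)
      - Mminus a θ (n + 1 / 2) * Mplus a θ (n + 1 / 2)
      = (2 * n) • (1 : Matrix (Fin 2) (Fin 2) ℂ) := by
  have hc : (Real.cosh θ : ℂ) ≠ 0 := by exact_mod_cast ne_of_gt (Real.cosh_pos θ)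
  have key : Complex.tanh θ ^ 2 + (Complex.cosh θ)⁻¹ ^ 2 = 1 := by
    have h : Real.tanh θ ^ 2 + (Real.cosh θ)⁻¹ ^ 2 = 1 := by
      rw [Real.tanh_eq_sinh_div_cosh]
      have hcr : Real.cosh θ ≠ 0 := ne_of_gt (Real.cosh_pos θ)
      field_simp
      nlinarith [Real.cosh_sq θ]
    push_cast at h ⊢; exact_mod_cast h
  ext i j
  fin_cases i <;> fin_cases j <;>
    simp [Mplus, Mminus, Matrix.mul_apply, Fin.sum_univ_two, Matrix.one_apply,
      Matrix.smul_apply, div_eq_mul_inv] <;>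
    push_cast <;>
    first
      | linear_combination (2 * n : ℂ) * key
      | ring
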